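/- For every vertex k ∈ Fin N, applying the generalized Pauli operator X_k to a qudit hypergraph state yields another qudit hypergraph state: X_k |H(m)⟩ = |H(m')⟩, where the new multiplicity function is given by m'(e) = m(e) + m(e ∪ {k}) (in ZMod d) for hyperedges e with k ∉ e, and m'(e) = m(e) for hyperedges e with k ∈ e. -/

import Mathlib

open Finset

noncomputable section

/-- The primitive `d`-th root of unity `ω = exp(2πi/d)`. -/
def omega (d : ℕ) : ℂ := Complex.exp (2 * Real.pi * Complex.I / d)

/-- The `N`-qudit Hilbert space, modeled as functions from points to amplitudes. -/
abbrev QV (d N : ℕ) := (Fin N → Fin d) → ℂ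

/-- Diagonal operator with diagonal phase function `φ`. -/
def diagOp (d N : ℕ) (φ : (Fin N → Fin d) → ℂ) : Module.End ℂ (QV d N) where
  toFun ψ := fun i => φ i * ψ i
  map_add' ψ ψ' := by funext i; simp [mul_add]
  map_smul' c ψ := by funext i; simp [smul_eq_mul]; ring

lemma diag_comm (d N : ℕ) (φ φ' : (Fin N → Fin d) → ℂ) :
    Commute (diagOp d N φ) (diagOp d N φ') := by
  apply LinearMap.ext; intro ψ; funext i
  simp [diagOp, Module.End.mul_apply]; ring

/-- The hyperedge operator `C_e`. -/
def Ce (d N : ℕ) (e : Finset (Fin N)) : Module.End ℂ (QV d N) :=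
  diagOp d N fun i => omega d ^ ∏ k ∈ e, (i k : ℕ)

/-- The inverse of the hyperedge operator `C_e`. -/
def CeInv (d N : ℕ) (e : Finset (Fin N)) : Module.End ℂ (QV d N) :=
  diagOp d N fun i => (omega d ^ ∏ k ∈ e, (i k : ℕ))⁻¹

/-- The qudit hypergraph state `|H(m)⟩` for a multiplicity function `m`. -/
def Hstate (d N : ℕ) (m : Finset (Fin N) → ZMod d) : QV d N :=
  fun i => (d : ℂ) ^ (-(N : ℂ)/2) *
    omega d ^ (∑ e : Finset (Fin N), m e * ∏ k ∈ e, ((i k : ℕ) : ZMod d)).val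

/-- The generalized Pauli `X` operator on vertex `k`. -/
def Xop (d N : ℕ) [NeZero d] (k : Fin N) : Module.End ℂ (QV d N) where
  toFun ψ := fun i => ψ (Function.update i k (i k + 1))
  map_add' ψ ψ' := by funext i; simp
  map_smul' c ψ := by funext i; simp

lemma key_sum (d N : ℕ) [NeZero d] (m : Finset (Fin N) → ZMod d) (k : Fin N)
    (i : Fin N → Fin d) :
    (∑ e : Finset (Fin N), m e *
        ∏ j ∈ e, ((Function.update i k (i k + 1) j : ℕ) : ZMod d)) =
    ∑ e : Finset (Fin N), (if k ∈ e then m e else m e + m (e ∪ {k})) *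
        ∏ j ∈ e, ((i j : ℕ) : ZMod d) := by
  set c : Fin N → ZMod d := fun j => ((i j : ℕ) : ZMod d) with hc
  have hg : ∀ j, ((Function.update i k (i k + 1) j : ℕ) : ZMod d) =
      if j = k then c k + 1 else c j := by
    intro j
    rcases eq_or_ne j k with rfl | h
    · simp only [Function.update_self, if_pos rfl, hc]
      rw [Fin.val_add, ZMod.natCast_mod, Nat.cast_add, Fin.val_one', ZMod.natCast_mod,
        Nat.cast_one, if_pos trivial]
    · simp [Function.update_of_ne h, h, hc]
  have step1 : (∑ e : Finset (Fin N), m e *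
        ∏ j ∈ e, ((Function.update i k (i k + 1) j : ℕ) : ZMod d)) =
      ∑ e : Finset (Fin N), (m e * ∏ j ∈ e, c j +
        if k ∈ e then m e * ∏ j ∈ e.erase k, c j else 0) := by
    refine Finset.sum_congr rfl fun e _ => ?_
    by_cases hk : k ∈ e
    · rw [← Finset.mul_prod_erase _ _ hk]
      have h1 : ∀ j ∈ e.erase k, ((Function.update i k (i k + 1) j : ℕ) : ZMod d) = c j := by
        intro j hj
        rw [hg j, if_neg (Finset.ne_of_mem_erase hj)]
      rw [Finset.prod_congr rfl h1, hg k, if_pos rfl, if_pos hk,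
        ← Finset.mul_prod_erase e c hk]
      ring
    · have h1 : ∀ j ∈ e, ((Function.update i k (i k + 1) j : ℕ) : ZMod d) = c j := by
        intro j hj
        rw [hg j, if_neg (by rintro rfl; exact hk hj)]
      rw [Finset.prod_congr rfl h1, if_neg hk, add_zero]
  have step2 : (∑ e : Finset (Fin N), (if k ∈ e then m e else m e + m (e ∪ {k})) *
        ∏ j ∈ e, c j) =
      ∑ e : Finset (Fin N), (m e * ∏ j ∈ e, c j +
        if k ∉ e then m (e ∪ {k}) * ∏ j ∈ e, c j else 0) := by
    refine Finset.sum_congr rfl fun e _ => ?_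
    by_cases hk : k ∈ e
    · simp [hk]
    · simp [hk]; ring
  rw [step1, step2, Finset.sum_add_distrib, Finset.sum_add_distrib]
  congr 1
  rw [← Finset.sum_filter, ← Finset.sum_filter]
  refine Finset.sum_nbij' (fun e => e.erase k) (fun e => insert k e) ?_ ?_ ?_ ?_ ?_
  · intro e he
    simp only [Finset.mem_filter, Finset.mem_univ, true_and] at he ⊢
    exact Finset.notMem_erase k e
  · intro e he
    simp only [Finset.mem_filter, Finset.mem_univ, true_and] at he ⊢
    exact Finset.mem_insert_self k e
  · intro e he
    simp only [Finset.mem_filter, Finset.mem_univ, true_and] at he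
    exact Finset.insert_erase he
  · intro e he
    simp only [Finset.mem_filter, Finset.mem_univ, true_and] at he
    exact Finset.erase_insert he
  · intro e he
    simp only [Finset.mem_filter, Finset.mem_univ, true_and] at he
    rw [Finset.union_comm, ← Finset.insert_eq, Finset.insert_erase he]

/-- Applying the generalized Pauli `X_k` to a qudit hypergraph state
yields another qudit hypergraph state, with new multiplicity function
`m'(e) = m(e) + m(e ∪ {k})` for `k ∉ e` and `m'(e) = m(e)` for `k ∈ e`. -/
theorem Xop_Hstate (d N : ℕ) [NeZero d] (hd : 2 ≤ d) (hN : 1 ≤ N)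
    (m : Finset (Fin N) → ZMod d) (k : Fin N) :
    Xop d N k (Hstate d N m) =
      Hstate d N (fun e => if k ∈ e then m e else m e + m (e ∪ {k})) := by
  funext i
  show Hstate d N m (Function.update i k (i k + 1)) = _
  unfold Hstate
  rw [key_sum d N m k i]

end
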